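/- arXiv:1310.1580 — 6 statements merged into one kernel-verified Lean document; each statement's English description precedes it below -/
import Mathlib

section
/- Define a sequence $d : \mathbb{N} \to \mathbb{Z}$ by $d(1) = m_1 > 0$, $d(2) = m_2 > 0$ with $m_1 \ge m_2$, and $d(i+1) = \delta d(i) - d(i-1)$ for $i \ge 2$, where $\delta \ge 1$ is an integer satisfying $m_1^2 + m_2^2 - \delta m_1 m_2 > 0$. Then there exists $k \ge 3$ such that $d(k-1) > 0$ and $d(k) \le 0$. -/
/-- key step: descent -/
lemma mori_step (δ a b : ℤ) (hδ : 1 ≤ δ) (hb : 0 < b) (hab : b ≤ a)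
    (hΔ : 0 < a ^ 2 + b ^ 2 - δ * a * b) : δ * b - a < b := by
  by_contra h
  push_neg at h
  have h1 : a ≤ (δ - 1) * b := by linarith
  nlinarith [mul_le_mul_of_nonneg_left h1 (le_of_lt (lt_of_lt_of_le hb hab)),
    mul_le_mul_of_nonneg_left hab hb.le]

/-- Termination of Mori's division algorithm: the sequence `d` with
`d 1 = m₁ ≥ d 2 = m₂ > 0` and `d (i+1) = δ * d i - d (i-1)` eventually becomes nonpositive. -/
theorem stmt2 (δ m1 m2 : ℤ) (hδ : 1 ≤ δ) (hm2 : 0 < m2) (hm12 : m2 ≤ m1)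
    (hΔ : 0 < m1 ^ 2 + m2 ^ 2 - δ * m1 * m2)
    (d : ℕ → ℤ) (hd1 : d 1 = m1) (hd2 : d 2 = m2)
    (hrec : ∀ i, 2 ≤ i → d (i + 1) = δ * d i - d (i - 1)) :
    ∃ k, 3 ≤ k ∧ 0 < d (k - 1) ∧ d k ≤ 0 := by
  by_contra hcon
  push_neg at hcon
  have hpos : ∀ k, 3 ≤ k → 0 < d (k - 1) → 0 < d k := hcon
  have main : ∀ j : ℕ, 0 < d (j + 2) ∧ d (j + 2) ≤ d (j + 1) ∧
      d (j + 2) ≤ m2 - j ∧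
      0 < d (j + 1) ^ 2 + d (j + 2) ^ 2 - δ * d (j + 1) * d (j + 2) := by
    intro j
    induction j with
    | zero =>
      refine ⟨by rw [hd2]; exact hm2, by rw [hd1, hd2]; exact hm12, by rw [hd2]; simp, ?_⟩
      rw [hd1, hd2]; push_cast; linarith
    | succ n ih =>
      obtain ⟨hb, hab, hbound, hinv⟩ := ih
      have hrec' : d (n + 3) = δ * d (n + 2) - d (n + 1) := by
        have := hrec (n + 2) (by omega)
        simpa using this
      have hlt : d (n + 3) < d (n + 2) := by
        rw [hrec']; exact mori_step δ (d (n + 1)) (d (n + 2)) hδ hb hab hinv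
      have hpos3 : 0 < d (n + 3) := by
        have := hpos (n + 3) (by omega) (by simpa using hb)
        simpa using this
      refine ⟨hpos3, hlt.le, by push_cast; push_cast at hbound; linarith, ?_⟩
      rw [hrec']; nlinarith [hinv]
  obtain ⟨hp, -, hbd, -⟩ := main m2.toNat
  have : (m2.toNat : ℤ) = m2 := Int.toNat_of_nonneg hm2.le
  rw [this] at hbd
  linarith
end

section
/- Let $m_1, m_2, a_1, a_2 \in \mathbb{N}$ with $1 \le a_i \le m_i$, $\gcd(a_i, m_i) = 1$, $\delta := m_1 a_2 + m_2 a_1 - m_1 m_2 > 0$, $\Delta := m_1^2 + m_2^2 - \delta m_1 m_2 > 0$. For an index $j$ define $m_1^j = d(j)$, $m_2^j = d(j+1)$, $a_1^j = c(j)$, $a_2^j = m_2^j - c(j+1)$, where $c$ satisfies the same recursion $c(i-1) + c(i+1) = \delta c(i)$ with $c(1) = a_1$, $c(2) = m_2 - a_2$. Then $m_1^j a_2^j + m_2^j a_1^j - m_1^j m_2^j = \delta$ and $(m_1^j)^2 + (m_2^j)^2 - \delta m_1^j m_2^j = \Delta$, provided $d(j), d(j+1) > 0$. -/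
/-- Mutation of the k2A data `(m₁, m₂, a₁, a₂)` along the recursions preserves the
invariants `δ` and `Δ`. Here `m₁ʲ = d j`, `m₂ʲ = d (j+1)`, `a₁ʲ = c j`,
`a₂ʲ = d (j+1) - c (j+1)`. -/
theorem stmt4 (m1 m2 a1 a2 : ℕ) (δ Δ : ℤ)
    (ha1 : 1 ≤ a1) (ha1m : a1 ≤ m1) (ha2 : 1 ≤ a2) (ha2m : a2 ≤ m2)
    (hg1 : Nat.gcd a1 m1 = 1) (hg2 : Nat.gcd a2 m2 = 1)
    (hδ : δ = (m1 : ℤ) * a2 + (m2 : ℤ) * a1 - (m1 : ℤ) * m2) (hδpos : 0 < δ)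
    (hΔ : Δ = (m1 : ℤ) ^ 2 + (m2 : ℤ) ^ 2 - δ * m1 * m2) (hΔpos : 0 < Δ)
    (d c : ℕ → ℤ) (hd1 : d 1 = m1) (hd2 : d 2 = m2)
    (hc1 : c 1 = a1) (hc2 : c 2 = (m2 : ℤ) - a2)
    (hdrec : ∀ i, d i + d (i + 2) = δ * d (i + 1))
    (hcrec : ∀ i, c i + c (i + 2) = δ * c (i + 1))
    (j : ℕ) (hj : 1 ≤ j) (hdj : 0 < d j) (hdj1 : 0 < d (j + 1)) :
    d j * (d (j + 1) - c (j + 1)) + d (j + 1) * c j - d j * d (j + 1) = δ ∧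
    d j ^ 2 + d (j + 1) ^ 2 - δ * d j * d (j + 1) = Δ := by
  have key : ∀ n : ℕ, (d (n+2) * c (n+1) - d (n+1) * c (n+2) = δ) ∧
      (d (n+1) ^ 2 + d (n+2) ^ 2 - δ * d (n+1) * d (n+2) = Δ) := by
    intro n
    induction n with
    | zero =>
      refine ⟨?_, ?_⟩
      · rw [hd1, hd2, hc1, hc2]; linarith [hδ]
      · rw [hd1, hd2]; linarith [hΔ]
    | succ n ih =>
      have e1 : d (n+3) = δ * d (n+2) - d (n+1) := by linarith [hdrec (n+1)]
      have e2 : c (n+3) = δ * c (n+2) - c (n+1) := by linarith [hcrec (n+1)]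
      have h3 : n + 1 + 2 = n + 3 := by ring
      have h2 : n + 1 + 1 = n + 2 := by ring
      refine ⟨?_, ?_⟩
      · rw [h3, h2, e1, e2]; linear_combination ih.1
      · rw [h3, h2, e1]; linear_combination ih.2
  obtain ⟨n, rfl⟩ : ∃ n, j = n + 1 := ⟨j - 1, by omega⟩
  obtain ⟨k1, k2⟩ := key n
  refine ⟨by linear_combination k1, by linear_combination k2⟩
end

section
/- With $d(j), d(j+1) > 0$, $m_i^j$ and $a_i^j$ defined as above (from sequences $d, c$ with $d(1)=m_1, d(2)=m_2, c(1)=a_1, c(2)=m_2-a_2$ and recursion $x(i+1) = \delta x(i) - x(i-1)$), we have $1 \le a_i^j \le m_i^j$ and $\gcd(a_i^j, m_i^j) = 1$ for $i = 1, 2$. -/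
/-- The conditions satisfied by a (possibly mutated) k2A quadruple, together with the
invariant values `δ` and `Δ`. -/
def MGood (δ Δ M1 M2 A1 A2 : ℤ) : Prop :=
  0 < M1 ∧ 0 < M2 ∧ 1 ≤ A1 ∧ A1 ≤ M1 ∧ 1 ≤ A2 ∧ A2 ≤ M2 ∧
  Int.gcd A1 M1 = 1 ∧ Int.gcd A2 M2 = 1 ∧
  δ = M1 * A2 + M2 * A1 - M1 * M2 ∧ Δ = M1 ^ 2 + M2 ^ 2 - δ * M1 * M2

lemma MGood.swap {δ Δ M1 M2 A1 A2 : ℤ} (h : MGood δ Δ M1 M2 A1 A2) :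
    MGood δ Δ M2 M1 A2 A1 := by
  obtain ⟨h1, h2, h3, h4, h5, h6, h7, h8, h9, h10⟩ := h
  exact ⟨h2, h1, h5, h6, h3, h4, h8, h7, by rw [h9]; ring, by rw [h10]; ring⟩

lemma MGood.step {δ Δ M1 M2 A1 A2 : ℤ} (h : MGood δ Δ M1 M2 A1 A2)
    (hδpos : 0 < δ) (hΔpos : 0 < Δ) (hM2' : 0 < δ * M2 - M1) :
    MGood δ Δ M2 (δ * M2 - M1) (M2 - A2) (δ * A2 + A1 - M1) := by
  obtain ⟨hM1, hM2, hA1, hA1M, hA2, hA2M, hg1, hg2, hδ, hΔ⟩ := h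
  -- M2 ≥ 2
  have hM2two : 2 ≤ M2 := by
    by_contra hc
    have hM2e : M2 = 1 := by omega
    have hA2e : A2 = 1 := by omega
    rw [hM2e, hA2e] at hδ
    have h1 : δ = A1 := by linarith
    rw [hM2e] at hM2'
    linarith
  -- A2 < M2
  have hA2lt : A2 < M2 := by
    rcases lt_or_eq_of_le hA2M with h | h
    · exact h
    · exfalso
      rw [h, Int.gcd_self] at hg2
      omega
  -- key identity
  have hkey : M2 * (δ * A2 + A1 - M1) = A2 * (δ * M2 - M1) + δ := by rw [hδ]; ring
  have hA2'pos : 1 ≤ δ * A2 + A1 - M1 := by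
    nlinarith [hkey, mul_pos (show (0:ℤ) < A2 by linarith) hM2', hδpos, hM2]
  have hA2'le : δ * A2 + A1 - M1 ≤ δ * M2 - M1 := by
    by_contra hc
    push_neg at hc
    have p1 : 0 ≤ (M2 - A2 - 1) * (δ * M2 - M1) :=
      mul_nonneg (by linarith) (le_of_lt hM2')
    have p2 : 0 ≤ ((δ * A2 + A1 - M1) - (δ * M2 - M1) - 1) * M2 :=
      mul_nonneg (by linarith) (by linarith)
    have h1 : δ ≥ M2 + (δ * M2 - M1) := by nlinarith [hδ, p1, p2]
    have hΔ2 : Δ = M2 ^ 2 + (δ * M2 - M1) ^ 2 - δ * M2 * (δ * M2 - M1) := by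
      rw [hΔ]; ring
    have q1 : 0 ≤ (δ - M2 - (δ * M2 - M1)) * (M2 * (δ * M2 - M1)) :=
      mul_nonneg (by linarith) (le_of_lt (mul_pos hM2 hM2'))
    have q2 : 0 ≤ ((δ * M2 - M1) - 1) * M2 ^ 2 :=
      mul_nonneg (by linarith) (sq_nonneg M2)
    have q3 : 0 ≤ (M2 - 2) * (δ * M2 - M1) ^ 2 :=
      mul_nonneg (by linarith) (sq_nonneg _)
    have q4 : (1:ℤ) ≤ (δ * M2 - M1) ^ 2 := by nlinarith [hM2']
    nlinarith [hΔ2, q1, q2, q3, q4, hΔpos]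
  -- gcd (M2 - A2) M2 = 1
  have hg1' : Int.gcd (M2 - A2) M2 = 1 := by
    rw [← Int.isCoprime_iff_gcd_eq_one] at hg2 ⊢
    obtain ⟨u, v, huv⟩ := hg2
    exact ⟨-u, v + u, by linear_combination huv⟩
  -- gcd (δ*A2+A1-M1) (δ*M2-M1) = 1
  have hg2' : Int.gcd (δ * A2 + A1 - M1) (δ * M2 - M1) = 1 := by
    rw [← Int.isCoprime_iff_gcd_eq_one] at hg1 ⊢
    obtain ⟨u, v, huv⟩ := hg1
    have e1 : A1 = (1 - A2 * M2 + M2 ^ 2) * (δ * A2 + A1 - M1)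
        + (A2 ^ 2 - A2 * M2 - 1) * (δ * M2 - M1) := by rw [hδ]; ring
    have e2 : M1 = M2 ^ 2 * (δ * A2 + A1 - M1)
        + (-(A2 * M2 + 1)) * (δ * M2 - M1) := by rw [hδ]; ring
    exact ⟨u * (1 - A2 * M2 + M2 ^ 2) + v * M2 ^ 2,
      u * (A2 ^ 2 - A2 * M2 - 1) + v * (-(A2 * M2 + 1)),
      by linear_combination huv - u * e1 - v * e2⟩
  refine ⟨hM2, hM2', by linarith, by linarith, hA2'pos, hA2'le, hg1', hg2', ?_, ?_⟩
  · rw [hδ]; ring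
  · rw [hΔ]; ring

/-- For `δ ≥ 2`, once the sequence has a nonpositive entry followed by a larger one,
all earlier entries are nonpositive (backward descent). -/
lemma mutation_desc (d : ℕ → ℤ) (δ : ℤ)
    (hdrec : ∀ i, d i + d (i + 2) = δ * d (i + 1)) (hδ2 : 2 ≤ δ) :
    ∀ n k, d (k + n + 1) ≤ 0 → d (k + n + 1) < d (k + n + 2) →
      d (k + 1) ≤ 0 ∧ d (k + 1) < d (k + 2) := by
  intro n
  induction n with
  | zero =>
    intro k h1 h2
    exact ⟨h1, h2⟩
  | succ n ih =>
    intro k h1 h2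
    have h1' : d (k + 1 + n + 1) ≤ 0 := by
      rw [show k + 1 + n + 1 = k + (n + 1) + 1 by omega]; exact h1
    have h2' : d (k + 1 + n + 1) < d (k + 1 + n + 2) := by
      rw [show k + 1 + n + 1 = k + (n + 1) + 1 by omega,
        show k + 1 + n + 2 = k + (n + 1) + 2 by omega]; exact h2
    obtain ⟨g1, g2⟩ := ih (k + 1) h1' h2'
    have g1' : d (k + 2) ≤ 0 := by rw [show k + 2 = k + 1 + 1 by omega]; exact g1
    have g2' : d (k + 2) < d (k + 3) := by
      rw [show k + 2 = k + 1 + 1 by omega, show k + 3 = k + 1 + 2 by omega]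
      exact g2
    have hr := hdrec (k + 1)
    rw [show k + 1 + 2 = k + 3 by omega, show k + 1 + 1 = k + 2 by omega] at hr
    have : d (k + 1) < d (k + 2) := by nlinarith [hr, g1', g2']
    exact ⟨by linarith, this⟩

/-- The mutated k2A data `m₁ʲ = d j`, `m₂ʲ = d (j+1)`, `a₁ʲ = c j`, `a₂ʲ = d (j+1) - c (j+1)`
again satisfies `1 ≤ aᵢʲ ≤ mᵢʲ` and `gcd(aᵢʲ, mᵢʲ) = 1`. -/
theorem stmt5 (m1 m2 a1 a2 : ℕ) (δ Δ : ℤ)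
    (ha1 : 1 ≤ a1) (ha1m : a1 ≤ m1) (ha2 : 1 ≤ a2) (ha2m : a2 ≤ m2)
    (hg1 : Nat.gcd a1 m1 = 1) (hg2 : Nat.gcd a2 m2 = 1)
    (hδ : δ = (m1 : ℤ) * a2 + (m2 : ℤ) * a1 - (m1 : ℤ) * m2) (hδpos : 0 < δ)
    (hΔ : Δ = (m1 : ℤ) ^ 2 + (m2 : ℤ) ^ 2 - δ * m1 * m2) (hΔpos : 0 < Δ)
    (d c : ℕ → ℤ) (hd1 : d 1 = m1) (hd2 : d 2 = m2)
    (hc1 : c 1 = a1) (hc2 : c 2 = (m2 : ℤ) - a2)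
    (hdrec : ∀ i, d i + d (i + 2) = δ * d (i + 1))
    (hcrec : ∀ i, c i + c (i + 2) = δ * c (i + 1))
    (j : ℕ) (hj : 1 ≤ j) (hdj : 0 < d j) (hdj1 : 0 < d (j + 1)) :
    (1 ≤ c j ∧ c j ≤ d j ∧ Int.gcd (c j) (d j) = 1) ∧
    (1 ≤ d (j + 1) - c (j + 1) ∧ d (j + 1) - c (j + 1) ≤ d (j + 1) ∧
      Int.gcd (d (j + 1) - c (j + 1)) (d (j + 1)) = 1) := by
  have ha1' : (1:ℤ) ≤ (a1:ℤ) := by exact_mod_cast ha1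
  have ha1m' : (a1:ℤ) ≤ (m1:ℤ) := by exact_mod_cast ha1m
  have ha2' : (1:ℤ) ≤ (a2:ℤ) := by exact_mod_cast ha2
  have ha2m' : (a2:ℤ) ≤ (m2:ℤ) := by exact_mod_cast ha2m
  have hec : d 2 - c 2 = (a2:ℤ) := by rw [hd2, hc2]; ring
  have Gbase : MGood δ Δ (d 1) (d 2) (c 1) (d 2 - c 2) := by
    rw [hec, hd1, hd2, hc1]
    refine ⟨by linarith, by linarith, ha1', ha1m', ha2', ha2m', ?_, ?_, ?_, ?_⟩
    · rw [Int.gcd_natCast_natCast]; exact hg1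
    · rw [Int.gcd_natCast_natCast]; exact hg2
    · exact hδ
    · exact hΔ
  have main : ∀ j, 1 ≤ j → 0 < d j → 0 < d (j + 1) →
      MGood δ Δ (d j) (d (j + 1)) (c j) (d (j + 1) - c (j + 1)) := by
    intro j
    induction j using Nat.strong_induction_on with
    | _ j IH =>
      intro hj hdj hdj1
      rcases eq_or_lt_of_le hj with h1 | h2
      · rw [← h1]; exact Gbase
      · -- j ≥ 2
        have hj2 : 2 ≤ j := h2
        have hr' : d (j - 1) + d (j + 1) = δ * d j := by
          have := hdrec (j - 1)
          rwa [show j - 1 + 2 = j + 1 by omega, show j - 1 + 1 = j by omega] at this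
        have hcr' : c (j - 1) + c (j + 1) = δ * c j := by
          have := hcrec (j - 1)
          rwa [show j - 1 + 2 = j + 1 by omega, show j - 1 + 1 = j by omega] at this
        by_cases hprev : 0 < d (j - 1)
        · -- forward mutation step
          have G := IH (j - 1) (by omega) (by omega) hprev
            (by rw [show j - 1 + 1 = j by omega]; exact hdj)
          rw [show j - 1 + 1 = j by omega] at G
          have hstep := G.step hδpos hΔpos (show 0 < δ * d j - d (j - 1) by linarith)
          have e1 : δ * d j - d (j - 1) = d (j + 1) := by linarith
          have e2 : d j - (d j - c j) = c j := by ring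
          have e3 : δ * (d j - c j) + c (j - 1) - d (j - 1) = d (j + 1) - c (j + 1) := by
            linarith
          rw [e1, e2, e3] at hstep
          exact hstep
        · push_neg at hprev
          by_cases hδ2 : 2 ≤ δ
          · exfalso
            have hdesc := mutation_desc d δ hdrec hδ2 (j - 2) 0
              (by rw [show 0 + (j - 2) + 1 = j - 1 by omega]; exact hprev)
              (by rw [show 0 + (j - 2) + 1 = j - 1 by omega,
                show 0 + (j - 2) + 2 = j by omega]; linarith)
            have : d (0 + 1) ≤ 0 := hdesc.1
            rw [show 0 + 1 = 1 by omega, hd1] at this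
            linarith
          · have hδ1 : δ = 1 := by omega
            have h3d : ∀ k, d (k + 3) = - d k := by
              intro k
              have a := hdrec k
              have b := hdrec (k + 1)
              rw [show k + 1 + 2 = k + 3 by omega, show k + 1 + 1 = k + 2 by omega] at b
              rw [hδ1] at a b
              linarith
            have h3c : ∀ k, c (k + 3) = - c k := by
              intro k
              have a := hcrec k
              have b := hcrec (k + 1)
              rw [show k + 1 + 2 = k + 3 by omega, show k + 1 + 1 = k + 2 by omega] at b
              rw [hδ1] at a b
              linarith
            have h6d : ∀ k, d (k + 6) = d k := by
              intro k
              have a := h3d k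
              have b := h3d (k + 3)
              rw [show k + 3 + 3 = k + 6 by omega] at b
              linarith
            have h6c : ∀ k, c (k + 6) = c k := by
              intro k
              have a := h3c k
              have b := h3c (k + 3)
              rw [show k + 3 + 3 = k + 6 by omega] at b
              linarith
            by_cases hj7 : 7 ≤ j
            · -- reduce by periodicity
              have e1 : d j = d (j - 6) := by
                have := h6d (j - 6); rwa [show j - 6 + 6 = j by omega] at this
              have e2 : d (j + 1) = d (j - 6 + 1) := by
                have := h6d (j - 6 + 1)
                rwa [show j - 6 + 1 + 6 = j + 1 by omega] at this
              have e3 : c j = c (j - 6) := by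
                have := h6c (j - 6); rwa [show j - 6 + 6 = j by omega] at this
              have e4 : c (j + 1) = c (j - 6 + 1) := by
                have := h6c (j - 6 + 1)
                rwa [show j - 6 + 1 + 6 = j + 1 by omega] at this
              rw [e1, e2, e3, e4]
              exact IH (j - 6) (by omega) (by omega) (by rw [← e1]; exact hdj)
                (by rw [← e2]; exact hdj1)
            · -- 2 ≤ j ≤ 6
              interval_cases j
              · exfalso; rw [show (2:ℕ) - 1 = 1 by omega, hd1] at hprev; linarith
              · exfalso; rw [show (3:ℕ) - 1 = 2 by omega, hd2] at hprev; linarith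
              · exfalso
                have := h3d 1
                rw [show (1:ℕ) + 3 = 4 by omega, hd1] at this
                rw [this] at hdj
                linarith
              · exfalso
                have := h3d 2
                rw [show (2:ℕ) + 3 = 5 by omega, hd2] at this
                rw [this] at hdj
                linarith
              · -- j = 6 : backward mutation step from the base case
                have hd0 : d 0 + d 2 = δ * d 1 := by
                  have := hdrec 0
                  rwa [show (0:ℕ) + 2 = 2 by omega, show (0:ℕ) + 1 = 1 by omega] at this
                have hc0 : c 0 + c 2 = δ * c 1 := by
                  have := hcrec 0
                  rwa [show (0:ℕ) + 2 = 2 by omega, show (0:ℕ) + 1 = 1 by omega] at this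
                have h60 : d 6 = d 0 := by
                  have := h6d 0; rwa [show (0:ℕ) + 6 = 6 by omega] at this
                have h70 : d 7 = d 1 := by
                  have := h6d 1; rwa [show (1:ℕ) + 6 = 7 by omega] at this
                have c60 : c 6 = c 0 := by
                  have := h6c 0; rwa [show (0:ℕ) + 6 = 6 by omega] at this
                have c70 : c 7 = c 1 := by
                  have := h6c 1; rwa [show (1:ℕ) + 6 = 7 by omega] at this
                have hd0pos : 0 < d 0 := by rw [← h60]; exact hdj
                have S2 := Gbase.swap.step hδpos hΔpos
                  (show 0 < δ * d 1 - d 2 by linarith)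
                have f1 : δ * d 1 - d 2 = d 0 := by linarith
                have f2 : δ * c 1 + (d 2 - c 2) - d 2 = c 0 := by linarith
                rw [f1, f2] at S2
                have S4 := S2.swap
                show MGood δ Δ (d 6) (d 7) (c 6) (d 7 - c 7)
                rw [h60, h70, c60, c70]
                exact S4
  obtain ⟨g1, g2, g3, g4, g5, g6, g7, g8, g9, g10⟩ := main j hj hdj hdj1
  exact ⟨⟨g3, g4, g7⟩, ⟨g5, g6, g8⟩⟩
end

section
/- Let $X = \begin{pmatrix} a & b \\ c & d \end{pmatrix}$ with $\det X = 1$, and let $R_1 = \begin{pmatrix} 1 & -1 \\ 1 & 0 \end{pmatrix}$, $R_{-1} = \begin{pmatrix} 1 & 1 \\ -1 & 0 \end{pmatrix}$. For a sequence $\underline{i} = (i_1, \dots, i_q)$ with $i_\alpha = \pm 1$, define $R_{\underline{i}} = X R_{i_1} X^t R_{i_2} X R_{i_3} X^t \cdots$ (alternating $X$ and $X^t$, ending with $X$ or $X^t$ according to the parity of $q$). Then the upper-left entry of $R_{\underline{i}}$ is a polynomial in $a$ alone (independent of $b, c, d$ subject to $ad - bc = 1$). -/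
/-- `Rmat 1 = [[1,-1],[1,0]]` and `Rmat (-1) = [[1,1],[-1,0]]`. -/
def Rmat (i : ℤ) : Matrix (Fin 2) (Fin 2) ℤ := !![1, -i; i, 0]

/-- `Rprod X true [i₁,…,i_q] = X * R_{i₁} * Xᵀ * R_{i₂} * X * ⋯`, alternating `X` and `Xᵀ`
and ending with `X` or `Xᵀ` according to the parity of `q`. -/
def Rprod (X : Matrix (Fin 2) (Fin 2) ℤ) : Bool → List ℤ → Matrix (Fin 2) (Fin 2) ℤ
  | b, [] => if b then X else X.transpose
  | b, i :: l => (if b then X else X.transpose) * Rmat i * Rprod X (!b) l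

/- ### Auxiliary material over ℚ -/

/-- Rational version of `Rmat`. -/
def RmatQ (i : ℚ) : Matrix (Fin 2) (Fin 2) ℚ := !![1, -i; i, 0]

/-- Rational version of `Rprod`. -/
def RprodQ (X : Matrix (Fin 2) (Fin 2) ℚ) : Bool → List ℚ → Matrix (Fin 2) (Fin 2) ℚ
  | b, [] => if b then X else X.transpose
  | b, i :: l => (if b then X else X.transpose) * RmatQ i * RprodQ X (!b) l

/-- Elementary upper unitriangular matrix. -/
def Umat (s : ℚ) : Matrix (Fin 2) (Fin 2) ℚ := !![1, s; 0, 1]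

/-- Elementary lower unitriangular matrix. -/
def Lmat (t : ℚ) : Matrix (Fin 2) (Fin 2) ℚ := !![1, 0; t, 1]

lemma Umat_transpose (s : ℚ) : (Umat s).transpose = Lmat s := by
  ext i j; fin_cases i <;> fin_cases j <;> simp [Umat, Lmat]

lemma Lmat_transpose (t : ℚ) : (Lmat t).transpose = Umat t := by
  ext i j; fin_cases i <;> fin_cases j <;> simp [Umat, Lmat]

/-- The key conjugation identity `U s * R i * L s = R i`. -/
lemma key (s i : ℚ) : Umat s * RmatQ i * Lmat s = RmatQ i := by
  ext r c
  fin_cases r <;> fin_cases c <;>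
    simp [Umat, Lmat, RmatQ, Matrix.mul_apply, Fin.sum_univ_two] <;> ring

lemma key' (s i : ℚ) (M : Matrix (Fin 2) (Fin 2) ℚ) :
    Umat s * (RmatQ i * (Lmat s * M)) = RmatQ i * M := by
  rw [← mul_assoc, ← mul_assoc, key]

/-- Whether the last factor of `RprodQ X b l` is `X` (as opposed to `Xᵀ`). -/
def endX : Bool → List ℚ → Bool
  | b, [] => b
  | b, _ :: l => endX (!b) l

lemma rprod_mulU (X : Matrix (Fin 2) (Fin 2) ℚ) (s : ℚ) :
    ∀ (l : List ℚ) (b : Bool),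
      RprodQ (X * Umat s) b l =
        (if b then 1 else Lmat s) * RprodQ X b l * (if endX b l then Umat s else 1) := by
  intro l
  induction l with
  | nil =>
      intro b
      cases b <;>
        simp [RprodQ, endX, Matrix.transpose_mul, Umat_transpose, mul_assoc]
  | cons i l ih =>
      intro b
      cases b <;>
        simp [RprodQ, endX, ih, Matrix.transpose_mul, Umat_transpose, mul_assoc, key']

lemma rprod_Lmul (X : Matrix (Fin 2) (Fin 2) ℚ) (t : ℚ) :
    ∀ (l : List ℚ) (b : Bool),
      RprodQ (Lmat t * X) b l =
        (if b then Lmat t else 1) * RprodQ X b l * (if endX b l then 1 else Umat t) := by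
  intro l
  induction l with
  | nil =>
      intro b
      cases b <;>
        simp [RprodQ, endX, Matrix.transpose_mul, Lmat_transpose, mul_assoc]
  | cons i l ih =>
      intro b
      cases b <;>
        simp [RprodQ, endX, ih, Matrix.transpose_mul, Lmat_transpose, mul_assoc, key']

lemma mul_entry (M N : Matrix (Fin 2) (Fin 2) ℚ) (i j : Fin 2) :
    (M * N) i j = M i 0 * N 0 j + M i 1 * N 1 j := by
  rw [Matrix.mul_apply, Fin.sum_univ_two]

lemma entry_L (t : ℚ) (M : Matrix (Fin 2) (Fin 2) ℚ) (j : Fin 2) :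
    (Lmat t * M) 0 j = M 0 j := by
  simp [Lmat, Matrix.mul_apply, Fin.sum_univ_two]

lemma entry_U (s : ℚ) (M : Matrix (Fin 2) (Fin 2) ℚ) (i : Fin 2) :
    (M * Umat s) i 0 = M i 0 := by
  simp [Umat, Matrix.mul_apply, Fin.sum_univ_two]

/-- Zero case: if the upper-left entry is `0` (and the off-diagonal product is `-1`),
then the upper-left entry of every `RprodQ` is `0`. -/
lemma rprod_zero (X : Matrix (Fin 2) (Fin 2) ℚ) (h0 : X 0 0 = 0)
    (hd : X 0 1 * X 1 0 = -1) :
    ∀ (l : List ℚ) (b : Bool), (∀ i ∈ l, i * i = 1) →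
      (RprodQ X b l) 0 0 = 0 ∧ (RprodQ X b l) 0 1 * (RprodQ X b l) 1 0 = -1 := by
  intro l
  induction l with
  | nil =>
      intro b _
      cases b
      · refine ⟨h0, ?_⟩
        simp only [RprodQ, if_neg (Bool.false_ne_true), Matrix.transpose_apply]
        linarith [hd]
      · exact ⟨h0, hd⟩
  | cons i l ih =>
      intro b hl
      have hi : i * i = 1 := hl i (List.mem_cons_self ..)
      obtain ⟨hN0, hN⟩ := ih (!b) (fun j hj => hl j (List.mem_cons_of_mem _ hj))
      set N := RprodQ X (!b) l with hNdef
      have hZ0 : (if b then X else X.transpose) 0 0 = 0 := by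
        cases b <;> simp [h0, Matrix.transpose_apply]
      have hZd : (if b then X else X.transpose) 0 1 * (if b then X else X.transpose) 1 0 = -1 := by
        cases b <;> simp [Matrix.transpose_apply] <;> linarith [hd]
      set Z := if b then X else X.transpose with hZdef
      have hR : RprodQ X b (i :: l) = Z * RmatQ i * N := by
        rw [RprodQ, ← hZdef, ← hNdef]
      rw [hR]
      have e : ∀ r c : Fin 2, (Z * RmatQ i * N) r c =
          (Z r 0 * RmatQ i 0 0 + Z r 1 * RmatQ i 1 0) * N 0 c
          + (Z r 0 * RmatQ i 0 1 + Z r 1 * RmatQ i 1 1) * N 1 c := by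
        intro r c; rw [mul_entry, mul_entry, mul_entry]
      have hRe : RmatQ i 0 0 = 1 ∧ RmatQ i 0 1 = -i ∧ RmatQ i 1 0 = i ∧ RmatQ i 1 1 = 0 := by
        refine ⟨?_, ?_, ?_, ?_⟩ <;> simp [RmatQ]
      obtain ⟨r00, r01, r10, r11⟩ := hRe
      constructor
      · rw [e, r00, r01, r10, r11, hZ0, hN0]; ring
      · rw [e, e, r00, r01, r10, r11, hZ0, hN0]
        linear_combination (-(Z 0 1 * Z 1 0 * N 0 1 * N 1 0)) * hi +
          (-(N 0 1 * N 1 0)) * hZd + hN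

/-- Main lemma over ℚ. -/
lemma mainQ (X X' : Matrix (Fin 2) (Fin 2) ℚ) (hX : X.det = 1) (hX' : X'.det = 1)
    (ha : X 0 0 = X' 0 0) (l : List ℚ) (hl : ∀ i ∈ l, i * i = 1) :
    RprodQ X true l 0 0 = RprodQ X' true l 0 0 := by
  rw [Matrix.det_fin_two] at hX hX'
  by_cases h0 : X 0 0 = 0
  · have h0' : X' 0 0 = 0 := ha ▸ h0
    have hd : X 0 1 * X 1 0 = -1 := by rw [h0] at hX; linarith
    have hd' : X' 0 1 * X' 1 0 = -1 := by rw [h0'] at hX'; linarith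
    rw [(rprod_zero X h0 hd l true hl).1, (rprod_zero X' h0' hd' l true hl).1]
  · set s : ℚ := (X' 0 1 - X 0 1) / X 0 0 with hs
    set t : ℚ := (X' 1 0 - X 1 0) / X 0 0 with ht
    have hX'eq : X' = Lmat t * (X * Umat s) := by
      ext i j
      fin_cases i <;> fin_cases j <;>
        simp only [mul_entry, Fin.zero_eta, Fin.mk_one] <;>
        simp [Lmat, Umat, hs, ht]
      · exact ha.symm
      · field_simp
        ring
      · field_simp
        try linear_combination X 1 0 * ha
        ring
      · field_simp
        try linear_combination X' 1 1 * ha + hX' - hX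
    rw [hX'eq, rprod_Lmul, rprod_mulU]
    simp only [if_true]
    cases hE : endX true l <;>
      simp [entry_L, entry_U, hE, one_mul, mul_one]

/- ### Transfer from ℤ to ℚ -/

lemma map_Rmat (i : ℤ) :
    (Rmat i).map (Int.cast : ℤ → ℚ) = RmatQ (i : ℚ) := by
  ext r c
  fin_cases r <;> fin_cases c <;> simp [Rmat, RmatQ]

lemma map_Rprod (X : Matrix (Fin 2) (Fin 2) ℤ) :
    ∀ (l : List ℤ) (b : Bool),
      (Rprod X b l).map (Int.cast : ℤ → ℚ) =
        RprodQ (X.map (Int.cast : ℤ → ℚ)) b (l.map (Int.cast : ℤ → ℚ)) := by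
  intro l
  induction l with
  | nil =>
      intro b
      cases b <;> simp [Rprod, RprodQ, Matrix.transpose_map]
  | cons i l ih =>
      intro b
      have h1 : ∀ (M N : Matrix (Fin 2) (Fin 2) ℤ),
          (M * N).map (Int.cast : ℤ → ℚ) =
            M.map (Int.cast : ℤ → ℚ) * N.map (Int.cast : ℤ → ℚ) := fun A B => by
        simpa using Matrix.map_mul (L := A) (M := B) (f := Int.castRingHom ℚ)
      cases b <;>
        simp [Rprod, RprodQ, h1, ih, map_Rmat, Matrix.transpose_map, List.map_cons]

/-- Magic lemma, part 1: the upper-left entry of `R_ī = X R_{i₁} Xᵀ R_{i₂} X ⋯` depends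
only on the upper-left entry `a` of the determinant-one matrix `X`. -/
theorem stmt15 (X X' : Matrix (Fin 2) (Fin 2) ℤ) (hX : X.det = 1) (hX' : X'.det = 1)
    (ha : X 0 0 = X' 0 0) (l : List ℤ) (hl : ∀ i ∈ l, i = 1 ∨ i = -1) :
    Rprod X true l 0 0 = Rprod X' true l 0 0 := by
  apply @Int.cast_injective ℚ _
  have e1 : ((Rprod X true l 0 0 : ℤ) : ℚ) =
      RprodQ (X.map (Int.cast : ℤ → ℚ)) true (l.map (Int.cast : ℤ → ℚ)) 0 0 := by
    rw [← map_Rprod]; simp [Matrix.map_apply]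
  have e2 : ((Rprod X' true l 0 0 : ℤ) : ℚ) =
      RprodQ (X'.map (Int.cast : ℤ → ℚ)) true (l.map (Int.cast : ℤ → ℚ)) 0 0 := by
    rw [← map_Rprod]; simp [Matrix.map_apply]
  rw [e1, e2]
  apply mainQ
  · have := RingHom.map_det (Int.castRingHom ℚ) X
    rw [hX] at this
    simpa using this.symm
  · have := RingHom.map_det (Int.castRingHom ℚ) X'
    rw [hX'] at this
    simpa using this.symm
  · simp [Matrix.map_apply, ha]
  · intro i hi
    simp only [List.mem_map] at hi
    obtain ⟨j, hj, rfl⟩ := hi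
    rcases hl j hj with rfl | rfl <;> norm_num
end

section
/- With notation as in the previous statement, if $q$ is even then the upper-left entry of $R_{\underline{i}}$ equals the upper-left entry of $R_{\underline{j}}$, where $j_\alpha = -i_\alpha$ for all $\alpha$. -/
lemma entry_mul (Y M : Matrix (Fin 2) (Fin 2) ℤ) (i : ℤ) (k : Fin 2) :
    (Y * Rmat i * M) k 0 = (Y k 0 + i * Y k 1) * M 0 0 - i * Y k 0 * M 1 0 := by
  simp [Rmat, Matrix.mul_apply, Fin.sum_univ_two]
  ring

lemma rprod_key (X : Matrix (Fin 2) (Fin 2) ℤ) (hX : X.det = 1) (l : List ℤ) :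
    ∀ b : Bool, ∃ s t : ℤ,
      Rprod X b l 0 0 = t * X 0 0 ∧
      Rprod X b (l.map (fun i => -i)) 0 0 = t * X 0 0 ∧
      Rprod X b l 1 0 + Rprod X b (l.map (fun i => -i)) 1 0
        = 2 * t * (if b then X 1 0 else X 0 1) ∧
      Rprod X b l 1 0 - Rprod X b (l.map (fun i => -i)) 1 0 = 2 * s := by
  rw [Matrix.det_fin_two] at hX
  induction l with
  | nil =>
    intro b
    refine ⟨0, 1, ?_⟩
    cases b <;> simp [Rprod, Matrix.transpose_apply] <;> ring
  | cons i l ih =>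
    intro b
    have hmap : (i :: l).map (fun i => -i) = (-i) :: l.map (fun i => -i) := rfl
    cases b with
    | true =>
      obtain ⟨s, t, h1, h2, h3, h4⟩ := ih false
      simp only [if_false, Bool.false_eq_true] at h3
      have hm : Rprod X false l 1 0 = t * X 0 1 + s := by linarith
      have hn : Rprod X false (l.map (fun i => -i)) 1 0 = t * X 0 1 - s := by linarith
      refine ⟨i * t, t * X 0 0 - i * s, ?_, ?_, ?_, ?_⟩
      · have e : Rprod X true (i :: l) = X * Rmat i * Rprod X false l := by simp [Rprod]
        rw [e, entry_mul]
        linear_combination (X 0 0 + i * X 0 1) * h1 - (i * X 0 0) * hm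
      · have e : Rprod X true ((i :: l).map (fun i => -i))
            = X * Rmat (-i) * Rprod X false (l.map (fun i => -i)) := by
          rw [hmap]; simp [Rprod]
        rw [e, entry_mul]
        linear_combination (X 0 0 - i * X 0 1) * h2 + (i * X 0 0) * hn
      · have e1 : Rprod X true (i :: l) = X * Rmat i * Rprod X false l := by simp [Rprod]
        have e2 : Rprod X true ((i :: l).map (fun i => -i))
            = X * Rmat (-i) * Rprod X false (l.map (fun i => -i)) := by
          rw [hmap]; simp [Rprod]
        rw [e1, e2, entry_mul, entry_mul]
        simp only [if_true]
        linear_combination (X 1 0 + i * X 1 1) * h1 + (X 1 0 - i * X 1 1) * h2 -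
          (i * X 1 0) * hm + (i * X 1 0) * hn
      · have e1 : Rprod X true (i :: l) = X * Rmat i * Rprod X false l := by simp [Rprod]
        have e2 : Rprod X true ((i :: l).map (fun i => -i))
            = X * Rmat (-i) * Rprod X false (l.map (fun i => -i)) := by
          rw [hmap]; simp [Rprod]
        rw [e1, e2, entry_mul, entry_mul]
        linear_combination (X 1 0 + i * X 1 1) * h1 - (X 1 0 - i * X 1 1) * h2 -
          (i * X 1 0) * hm - (i * X 1 0) * hn + (2 * i * t) * hX
    | false =>
      obtain ⟨s, t, h1, h2, h3, h4⟩ := ih true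
      simp only [if_true] at h3
      have hm : Rprod X true l 1 0 = t * X 1 0 + s := by linarith
      have hn : Rprod X true (l.map (fun i => -i)) 1 0 = t * X 1 0 - s := by linarith
      have hT0 : X.transpose 0 0 = X 0 0 := rfl
      have hT1 : X.transpose 0 1 = X 1 0 := rfl
      have hT2 : X.transpose 1 0 = X 0 1 := rfl
      have hT3 : X.transpose 1 1 = X 1 1 := rfl
      refine ⟨i * t, t * X 0 0 - i * s, ?_, ?_, ?_, ?_⟩
      · have e : Rprod X false (i :: l) = X.transpose * Rmat i * Rprod X true l := by
          simp [Rprod]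
        rw [e, entry_mul, hT0, hT1]
        linear_combination (X 0 0 + i * X 1 0) * h1 - (i * X 0 0) * hm
      · have e : Rprod X false ((i :: l).map (fun i => -i))
            = X.transpose * Rmat (-i) * Rprod X true (l.map (fun i => -i)) := by
          rw [hmap]; simp [Rprod]
        rw [e, entry_mul, hT0, hT1]
        linear_combination (X 0 0 - i * X 1 0) * h2 + (i * X 0 0) * hn
      · have e1 : Rprod X false (i :: l) = X.transpose * Rmat i * Rprod X true l := by
          simp [Rprod]
        have e2 : Rprod X false ((i :: l).map (fun i => -i))
            = X.transpose * Rmat (-i) * Rprod X true (l.map (fun i => -i)) := by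
          rw [hmap]; simp [Rprod]
        rw [e1, e2, entry_mul, entry_mul, hT2, hT3]
        simp only [Bool.false_eq_true, if_false]
        linear_combination (X 0 1 + i * X 1 1) * h1 + (X 0 1 - i * X 1 1) * h2 -
          (i * X 0 1) * hm + (i * X 0 1) * hn
      · have e1 : Rprod X false (i :: l) = X.transpose * Rmat i * Rprod X true l := by
          simp [Rprod]
        have e2 : Rprod X false ((i :: l).map (fun i => -i))
            = X.transpose * Rmat (-i) * Rprod X true (l.map (fun i => -i)) := by
          rw [hmap]; simp [Rprod]
        rw [e1, e2, entry_mul, entry_mul, hT2, hT3]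
        linear_combination (X 0 1 + i * X 1 1) * h1 - (X 0 1 - i * X 1 1) * h2 -
          (i * X 0 1) * hm - (i * X 0 1) * hn + (2 * i * t) * hX

/-- Magic lemma, part 2: for an even-length sign sequence, negating all signs does not
change the upper-left entry of `R_ī`. -/
theorem stmt16 (X : Matrix (Fin 2) (Fin 2) ℤ) (hX : X.det = 1) (l : List ℤ)
    (hl : ∀ i ∈ l, i = 1 ∨ i = -1) (hlen : Even l.length) :
    Rprod X true l 0 0 = Rprod X true (l.map (fun i => -i)) 0 0 := by
  obtain ⟨s, t, h1, h2, _, _⟩ := rprod_key X hX l true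
  rw [h1, h2]
end

section
/- Let $s = 2l + 1$ be odd, $\mu$ a primitive $s$-th root of unity, $k \in \mathbb{Z}_s \setminus \{0\}$, and suppose $l \notin \langle 2k \rangle \subset \mathbb{Z}_s$. Let $\alpha$ be the minimal positive integer with $2k\alpha \equiv -k \pmod s$. Then $-2\sum_{j=1}^{\alpha} (\mu^{2kj} + \mu^{2kj + l}) = \frac{2\mu^k}{\mu^k + 1}(1 + \mu^l)$. -/
/-- The Gauss sum computation in the proof that a sequence of WW type admits at most two
compatible triangulations: for `s = 2l+1` odd, `μ` a primitive `s`-th root of unity,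
`k ≠ 0` in `ℤ/s` with `l ∉ ⟨2k⟩`, and `α` minimal positive with `2kα ≡ -k (mod s)`,
`-2 ∑_{j=1}^α (μ^{2kj} + μ^{2kj+l}) = (2μ^k/(μ^k+1)) (1+μ^l)`. -/
theorem stmt17 (s l k α : ℕ) (hs : s = 2 * l + 1)
    (μ : ℂ) (hμ : IsPrimitiveRoot μ s)
    (hk : (k : ZMod s) ≠ 0)
    (hl : (l : ZMod s) ∉ AddSubgroup.zmultiples ((2 * k : ℕ) : ZMod s))
    (hα : 0 < α) (hα2 : ((2 * k * α : ℕ) : ZMod s) = -(k : ZMod s))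
    (hαmin : ∀ β, 0 < β → β < α → ((2 * k * β : ℕ) : ZMod s) ≠ -(k : ZMod s)) :
    -2 * ∑ j ∈ Finset.Icc 1 α, (μ ^ (2 * k * j) + μ ^ (2 * k * j + l)) =
      2 * μ ^ k / (μ ^ k + 1) * (1 + μ ^ l) := by
  have hs0 : s ≠ 0 := by omega
  haveI : NeZero s := ⟨hs0⟩
  -- s is coprime to 2
  have hcop : Nat.Coprime s 2 := by
    rw [Nat.coprime_two_right]
    exact ⟨l, by omega⟩
  -- s does not divide k
  have hndvd : ¬ s ∣ k := fun h => hk ((ZMod.natCast_eq_zero_iff k s).mpr h)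
  -- μ^(2k) ≠ 1
  have hx1 : μ ^ (2 * k) ≠ 1 := by
    intro h
    exact hndvd (hcop.dvd_of_dvd_mul_left (hμ.pow_eq_one_iff_dvd (2 * k) |>.mp h))
  set t : ℂ := μ ^ k with ht
  have hc : μ ^ (2 * k) = t ^ 2 := by rw [ht, ← pow_mul, mul_comm]
  have ht1 : t + 1 ≠ 0 := by
    intro h
    apply hx1
    rw [hc]
    have h' : t = -1 := by linear_combination h
    rw [h']; ring
  have htm1 : t - 1 ≠ 0 := by
    intro h
    apply hx1
    rw [hc]
    have h' : t = 1 := by linear_combination h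
    rw [h']; ring
  -- key divisibility
  have hdvd : s ∣ 2 * k * α + k := by
    apply (ZMod.natCast_eq_zero_iff _ s).mp
    push_cast
    push_cast at hα2
    rw [hα2]; ring
  have hrel : μ ^ (2 * k * α) * t = 1 := by
    rw [ht, ← pow_add]
    exact (hμ.pow_eq_one_iff_dvd _).mpr hdvd
  set c : ℂ := μ ^ (2 * k) with hcdef
  set G : ℂ := ∑ j ∈ Finset.range α, c ^ j with hG
  have hgeom : (c - 1) * G = c ^ α - 1 := by
    rw [hG, mul_comm]; exact geom_sum_mul c α
  have hcα : c ^ α * t = 1 := by rw [hcdef, ← pow_mul, mul_comm (2*k) α, pow_mul, ← pow_mul, mul_comm α (2*k)] ; exact hrel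
  -- key: t * (t+1) * G = -1
  have key : t * (t + 1) * G = -1 := by
    apply mul_left_cancel₀ htm1
    have h1 : (t - 1) * (t * (t + 1) * G) = t * ((c - 1) * G) := by rw [hc]; ring
    rw [h1, hgeom]
    linear_combination hcα
  -- rewrite sum
  have hsum : ∑ j ∈ Finset.Icc 1 α, (μ ^ (2 * k * j) + μ ^ (2 * k * j + l))
      = (1 + μ ^ l) * (c * G) := by
    have : ∀ j, μ ^ (2 * k * j) + μ ^ (2 * k * j + l) = (1 + μ ^ l) * c ^ j := by
      intro j
      rw [pow_add, hcdef, ← pow_mul]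
      ring
    rw [Finset.sum_congr rfl fun j _ => this j, ← Finset.mul_sum]
    congr 1
    rw [← Finset.Ico_add_one_right_eq_Icc, Finset.sum_Ico_eq_sum_range]
    simp only [Nat.add_sub_cancel]
    rw [Finset.mul_sum]
    exact Finset.sum_congr rfl fun j _ => by rw [pow_add, pow_one]
  rw [hsum]
  rw [ht] at ht1 ⊢
  field_simp
  rw [hc]
  linear_combination (-(1 + μ ^ l) * μ ^ k) * key
end
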